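/- LDU decomposition in a domain: let A be an n×m matrix of rank r over a commutative domain R with all leading principal minors α^1,…,α^r nonzero. Then over the fraction field, A = L·D·U, where L = (α^j_{i,j}) (i = 1…n, j = 1…r) is lower triangular with diagonal entries α^1,…,α^r, D = diag(1/(α^{i−1} α^i))_{i=1…r}, and U = (α^i_{i,j}) (i = 1…r, j = 1…m) is upper triangular with diagonal entries α^1,…,α^r. Moreover, all entries of L and U lie in R. -/

import Mathlib

open Matrix

/-- `mnr A k i j` is the `k×k` minor of `A` on rows `1,…,k−1,i` and columns
`1,…,k−1,j` (positions are 1-indexed; `i j` are 0-indexed `Fin` values).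
For `k = 0` this is the empty determinant `1`. -/
def mnr {R : Type*} [CommRing R] {n m : ℕ} (A : Matrix (Fin n) (Fin m) R) (k : ℕ)
    (i : Fin n) (j : Fin m) : R :=
  Matrix.det (Matrix.of fun a b : Fin k =>
    A (if h : a.val < k - 1 ∧ a.val < n then ⟨a.val, h.2⟩ else i)
      (if h : b.val < k - 1 ∧ b.val < m then ⟨b.val, h.2⟩ else j))

/-- `lead A k` is the leading principal `k×k` minor `α^k` of `A`, with `α^0 = 1`. -/
def lead {R : Type*} [CommRing R] {n m : ℕ} (A : Matrix (Fin n) (Fin m) R) (k : ℕ) : R :=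
  if h : 0 < k ∧ k ≤ n ∧ k ≤ m then
    mnr A k ⟨k - 1, by omega⟩ ⟨k - 1, by omega⟩ else 1

def keepF (k : ℕ) (c : Fin 2) : Fin (k + 1) → Fin (k + 2) :=
  fun a => if h : a.val < k then ⟨a.val, by omega⟩ else ⟨k + c.val, by omega⟩

theorem dj_general {F : Type*} [Field F] {k : ℕ} (M : Matrix (Fin (k + 2)) (Fin (k + 2)) F)
    (hP : det (M.submatrix (Fin.castLE (by omega) : Fin k → Fin (k + 2))
      (Fin.castLE (by omega))) ≠ 0) :
    det M * det (M.submatrix (Fin.castLE (by omega) : Fin k → Fin (k + 2))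
        (Fin.castLE (by omega))) =
      det (M.submatrix (keepF k 0) (keepF k 0)) * det (M.submatrix (keepF k 1) (keepF k 1)) -
      det (M.submatrix (keepF k 0) (keepF k 1)) * det (M.submatrix (keepF k 1) (keepF k 0)) := by
  classical
  set e : Fin k ⊕ Fin 2 ≃ Fin (k + 2) := finSumFinEquiv
  set N : Matrix (Fin k ⊕ Fin 2) (Fin k ⊕ Fin 2) F := M.submatrix e e with hN
  have hPN : N.toBlocks₁₁ = M.submatrix (Fin.castLE (by omega) : Fin k → Fin (k + 2))
      (Fin.castLE (by omega)) := by
    ext i j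
    simp only [toBlocks₁₁, of_apply, hN, submatrix_apply]
    congr 1 <;> exact Fin.ext (by simp [e])
  haveI : Invertible N.toBlocks₁₁ :=
    invertibleOfIsUnitDet _ (isUnit_iff_ne_zero.2 (by rw [hPN]; exact hP))
  set T : Matrix (Fin 2) (Fin 2) F :=
    N.toBlocks₂₂ - N.toBlocks₂₁ * ⅟N.toBlocks₁₁ * N.toBlocks₁₂ with hT
  have hdetM : det M = det N.toBlocks₁₁ * det T := by
    rw [← det_submatrix_equiv_self e M, ← hN]
    conv_lhs => rw [← fromBlocks_toBlocks N]
    rw [det_fromBlocks₁₁]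
  have hminor : ∀ b c : Fin 2,
      det (M.submatrix (keepF k b) (keepF k c)) = det N.toBlocks₁₁ * T b c := by
    intro b c
    set e1 : Fin k ⊕ Fin 1 ≃ Fin (k + 1) := finSumFinEquiv
    have h1 : (M.submatrix (keepF k b) (keepF k c)).submatrix e1 e1 =
        fromBlocks N.toBlocks₁₁ (Matrix.of fun i (_ : Fin 1) => N.toBlocks₁₂ i c)
          (Matrix.of fun (_ : Fin 1) j => N.toBlocks₂₁ b j)
          (Matrix.of fun (_ : Fin 1) (_ : Fin 1) => N.toBlocks₂₂ b c) := by
      ext i j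
      rcases i with i | i <;> rcases j with j | j <;>
        · simp only [submatrix_apply, fromBlocks_apply₁₁, fromBlocks_apply₁₂,
            fromBlocks_apply₂₁, fromBlocks_apply₂₂, toBlocks₁₁, toBlocks₁₂, toBlocks₂₁,
            toBlocks₂₂, of_apply, hN, keepF]
          congr 1 <;> exact Fin.ext (by simp [e, e1]; try omega)
    have h2 := det_submatrix_equiv_self e1 (M.submatrix (keepF k b) (keepF k c))
    rw [← h2, h1, det_fromBlocks₁₁]
    congr 1
    rw [det_fin_one]
    simp [Matrix.sub_apply, of_apply, hT, mul_apply]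
  rw [hdetM, hminor, hminor, hminor, hminor, ← hPN]
  have hdT : det T = T 0 0 * T 1 1 - T 0 1 * T 1 0 := det_fin_two T
  rw [hdT]; ring

theorem det_submatrix_eq_zero_of_rank_lt {F : Type*} [Field F] {n m k : ℕ}
    (B : Matrix (Fin n) (Fin m) F) (h : B.rank < k)
    (rf : Fin k → Fin n) (cf : Fin k → Fin m) :
    det (B.submatrix rf cf) = 0 := by
  classical
  by_contra hd
  set P : Matrix (Fin k) (Fin n) F := Matrix.of fun a i => if rf a = i then (1 : F) else 0
  set Q : Matrix (Fin m) (Fin k) F := Matrix.of fun j b => if j = cf b then (1 : F) else 0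
  have hsub : B.submatrix rf cf = P * B * Q := by
    ext a b
    simp [P, Q, mul_apply, Finset.sum_ite_eq, Finset.sum_ite_eq', ite_mul, mul_ite]
  have hrk : (B.submatrix rf cf).rank = k := by
    rw [rank_of_isUnit _ ((isUnit_iff_isUnit_det _).2 (isUnit_iff_ne_zero.2 hd)),
      Fintype.card_fin]
  have hle1 : (P * B * Q).rank ≤ (P * B).rank := rank_mul_le_left (P * B) Q
  have hle2 : (P * B).rank ≤ B.rank := rank_mul_le_right P B
  rw [hsub, ] at hrk
  omega

theorem dj_step {F : Type*} [Field F] {n m : ℕ} (B : Matrix (Fin n) (Fin m) F) (k : ℕ)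
    (hkn : k + 1 ≤ n) (hkm : k + 1 ≤ m) (i : Fin n) (j : Fin m)
    (hP : lead B k ≠ 0) :
    mnr B (k + 2) i j * lead B k =
      lead B (k + 1) * mnr B (k + 1) i j -
      mnr B (k + 1) ⟨k, by omega⟩ j * mnr B (k + 1) i ⟨k, by omega⟩ := by
  set M : Matrix (Fin (k + 2)) (Fin (k + 2)) F := Matrix.of fun a b =>
    B (if h : a.val < k + 1 then ⟨a.val, by omega⟩ else i)
      (if h : b.val < k + 1 then ⟨b.val, by omega⟩ else j) with hM
  have e1 : det M = mnr B (k + 2) i j := by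
    unfold mnr
    congr 1
    ext a b
    simp only [of_apply, hM]
    congr 1 <;> · split_ifs <;> first | rfl | (exact Fin.ext (by omega)) | omega
  have e2 : det (M.submatrix (Fin.castLE (by omega) : Fin k → Fin (k + 2))
      (Fin.castLE (by omega))) = lead B k := by
    rcases Nat.eq_zero_or_pos k with hk | hk
    · subst hk
      rw [lead, dif_neg (by omega)]
      exact det_isEmpty
    · rw [lead, dif_pos ⟨hk, by omega, by omega⟩]
      unfold mnr
      congr 1
      ext a b
      simp only [of_apply, hM, submatrix_apply]
      congr 1 <;> · split_ifs <;>
        first | rfl | (exact Fin.ext (by simp; omega)) | (exfalso; simp_all <;> omega)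
  have hrow : ∀ (b : Fin 2) (a : Fin (k + 1)),
      (dite ((keepF k b a : ℕ) < k + 1)
        (fun h => (⟨(keepF k b a : ℕ), by omega⟩ : Fin n)) (fun _ => i)) =
      dite ((a : ℕ) < k + 1 - 1 ∧ (a : ℕ) < n) (fun h => (⟨(a : ℕ), h.2⟩ : Fin n))
        (fun _ => if b = 0 then ⟨k, by omega⟩ else i) := by
    intro b a
    rcases Nat.lt_or_ge (a : ℕ) k with h | h
    · have h1 : keepF k b a = ⟨(a : ℕ), by omega⟩ := dif_pos h
      simp only [h1]; rw [dif_pos (show ((⟨(a : ℕ), by omega⟩ : Fin (k + 2)) : ℕ) < k + 1 by simpa using by omega),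
        dif_pos (show (a : ℕ) < k + 1 - 1 ∧ (a : ℕ) < n by constructor <;> omega)]
    · have ha : (a : ℕ) = k := by omega
      have h1 : keepF k b a = ⟨k + (b : ℕ), by omega⟩ := dif_neg (by omega)
      simp only [h1]; rw [dif_neg (show ¬((a : ℕ) < k + 1 - 1 ∧ (a : ℕ) < n) by simp; omega)]
      fin_cases b
      · rw [dif_pos (by simp), if_pos (by decide)]
        exact Fin.ext (by simp)
      · rw [dif_neg (by simp), if_neg (by decide)]
  have hcol : ∀ (c : Fin 2) (d : Fin (k + 1)),
      (dite ((keepF k c d : ℕ) < k + 1)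
        (fun h => (⟨(keepF k c d : ℕ), by omega⟩ : Fin m)) (fun _ => j)) =
      dite ((d : ℕ) < k + 1 - 1 ∧ (d : ℕ) < m) (fun h => (⟨(d : ℕ), h.2⟩ : Fin m))
        (fun _ => if c = 0 then ⟨k, by omega⟩ else j) := by
    intro c d
    rcases Nat.lt_or_ge (d : ℕ) k with h | h
    · have h1 : keepF k c d = ⟨(d : ℕ), by omega⟩ := dif_pos h
      simp only [h1]; rw [dif_pos (show ((⟨(d : ℕ), by omega⟩ : Fin (k + 2)) : ℕ) < k + 1 by simpa using by omega),
        dif_pos (show (d : ℕ) < k + 1 - 1 ∧ (d : ℕ) < m by constructor <;> omega)]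
    · have hd : (d : ℕ) = k := by omega
      have h1 : keepF k c d = ⟨k + (c : ℕ), by omega⟩ := dif_neg (by omega)
      simp only [h1]; rw [dif_neg (show ¬((d : ℕ) < k + 1 - 1 ∧ (d : ℕ) < m) by simp; omega)]
      fin_cases c
      · rw [dif_pos (by simp), if_pos (by decide)]
        exact Fin.ext (by simp)
      · rw [dif_neg (by simp), if_neg (by decide)]
  have e3 : ∀ b c : Fin 2, det (M.submatrix (keepF k b) (keepF k c)) =
      mnr B (k + 1) (if b = 0 then ⟨k, by omega⟩ else i)
        (if c = 0 then ⟨k, by omega⟩ else j) := by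
    intro b c
    unfold mnr
    congr 1
    ext a d
    simp only [of_apply, hM, submatrix_apply]
    rw [hrow b a, hcol c d]
  have e4 : lead B (k + 1) = mnr B (k + 1) ⟨k, by omega⟩ ⟨k, by omega⟩ := by
    rw [lead, dif_pos ⟨by omega, by omega, by omega⟩]
    congr 1 <;> exact Fin.ext (by simp)
  have key := dj_general M (by rw [e2]; exact hP)
  rw [e1, e2, e3, e3, e3, e3] at key
  rw [e4]
  simpa using key


theorem mnr_map {R S : Type*} [CommRing R] [CommRing S] (f : R →+* S) {n m : ℕ}
    (A : Matrix (Fin n) (Fin m) R) (k : ℕ) (i : Fin n) (j : Fin m) :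
    mnr (A.map f) k i j = f (mnr A k i j) := by
  unfold mnr
  rw [RingHom.map_det]
  rfl

theorem lead_map {R S : Type*} [CommRing R] [CommRing S] (f : R →+* S) {n m : ℕ}
    (A : Matrix (Fin n) (Fin m) R) (k : ℕ) :
    lead (A.map f) k = f (lead A k) := by
  unfold lead
  split_ifs
  · exact mnr_map f A k _ _
  · simp

/-- LDU decomposition in a domain (statement as required). -/
theorem ldu_decomposition_in_domain {R : Type*} [CommRing R] [IsDomain R] {n m : ℕ}
    (A : Matrix (Fin n) (Fin m) R) (r : ℕ) (hrn : r ≤ n) (hrm : r ≤ m)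
    (hrank : (A.map (algebraMap R (FractionRing R))).rank = r)
    (hα : ∀ i, 1 ≤ i → i ≤ r → lead A i ≠ 0) :
    ∃ (L : Matrix (Fin n) (Fin r) (FractionRing R))
      (D : Matrix (Fin r) (Fin r) (FractionRing R))
      (U : Matrix (Fin r) (Fin m) (FractionRing R)),
      (L = Matrix.of fun a b =>
          algebraMap R (FractionRing R) (mnr A (b.val + 1) a ⟨b.val, by omega⟩)) ∧
      (D = Matrix.diagonal fun a =>
          1 / (algebraMap R (FractionRing R) (lead A a.val) *
            algebraMap R (FractionRing R) (lead A (a.val + 1)))) ∧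
      (U = Matrix.of fun a b =>
          algebraMap R (FractionRing R) (mnr A (a.val + 1) ⟨a.val, by omega⟩ b)) ∧
      A.map (algebraMap R (FractionRing R)) = L * D * U ∧
      (∀ (a : Fin n) (b : Fin r), a.val < b.val → L a b = 0) ∧
      (∀ a : Fin r, L ⟨a.val, by omega⟩ a = algebraMap R (FractionRing R) (lead A (a.val + 1))) ∧
      (∀ (a : Fin r) (b : Fin m), b.val < a.val → U a b = 0) ∧
      (∀ a : Fin r, U a ⟨a.val, by omega⟩ = algebraMap R (FractionRing R) (lead A (a.val + 1))) ∧
      (∀ (a : Fin n) (b : Fin r), ∃ x : R, L a b = algebraMap R (FractionRing R) x) ∧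
      (∀ (a : Fin r) (b : Fin m), ∃ x : R, U a b = algebraMap R (FractionRing R) x) := by
  classical
  set F := FractionRing R
  set φ : R →+* F := (algebraMap R F : R →+* F) with hφdef
  have hinj : Function.Injective φ := IsFractionRing.injective R F
  have hφne : ∀ {x : R}, x ≠ 0 → φ x ≠ 0 := fun hx => (map_ne_zero_iff φ hinj).2 hx
  set B : Matrix (Fin n) (Fin m) F := A.map φ with hB
  refine ⟨_, _, _, rfl, rfl, rfl, ?_, ?_, ?_, ?_, ?_, ?_, ?_⟩
  · -- the product identity
    ext i j
    have hlB : ∀ t, lead B t = φ (lead A t) := fun t => lead_map φ A t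
    have hlne : ∀ t, t ≤ r → φ (lead A t) ≠ 0 := by
      intro t ht
      rcases Nat.eq_zero_or_pos t with h0 | h1
      · subst h0
        rw [show lead A 0 = 1 from dif_neg (by omega), _root_.map_one]
        exact one_ne_zero
      · exact hφne (hα t h1 ht)
    have key : ∀ t, t ≤ r →
        ∑ l ∈ Finset.range t, (fun l : ℕ =>
          φ (mnr A (l + 1) i (if h : l < m then ⟨l, h⟩ else j)) *
            (1 / (φ (lead A l) * φ (lead A (l + 1)))) *
            φ (mnr A (l + 1) (if h : l < n then ⟨l, h⟩ else i) j)) l =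
          φ (A i j) - φ (mnr A (t + 1) i j) / φ (lead A t) := by
      intro t
      induction t with
      | zero =>
        intro _
        rw [Finset.range_zero, Finset.sum_empty]
        have h1 : mnr A 1 i j = A i j := by
          unfold mnr
          rw [det_fin_one]
          simp
        have h0 : lead A 0 = 1 := dif_neg (by omega)
        rw [h1, h0, _root_.map_one, div_one, sub_self]
      | succ t ih =>
        intro ht
        rw [Finset.sum_range_succ, ih (by omega)]
        have htn : t + 1 ≤ n := by omega
        have htm : t + 1 ≤ m := by omega
        have hd := dj_step B t htn htm i j (by rw [hlB]; exact hlne t (by omega))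
        simp only [hB, mnr_map, lead_map] at hd
        have hne1 : φ (lead A t) ≠ 0 := hlne t (by omega)
        have hne2 : φ (lead A (t + 1)) ≠ 0 := hlne (t + 1) (by omega)
        rw [dif_pos (show t < m by omega), dif_pos (show t < n by omega)]
        have h1 : φ (lead A t) * (φ (lead A t))⁻¹ = 1 := mul_inv_cancel₀ hne1
        have h2 : φ (lead A (t + 1)) * (φ (lead A (t + 1)))⁻¹ = 1 := mul_inv_cancel₀ hne2
        rw [show t + 1 + 1 = t + 2 from rfl]
        linear_combination ((φ (lead A t))⁻¹ * (φ (lead A (t + 1)))⁻¹) * hd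
          - (φ (mnr A (t + 2) i j) * (φ (lead A (t + 1)))⁻¹) * h1
          + (φ (mnr A (t + 1) i j) * (φ (lead A t))⁻¹) * h2
    have hvan : φ (mnr A (r + 1) i j) = 0 := by
      rw [← mnr_map φ]
      have hrepr : mnr B (r + 1) i j = det (B.submatrix
          (fun a : Fin (r + 1) =>
            if h : a.val < (r + 1) - 1 ∧ a.val < n then ⟨a.val, h.2⟩ else i)
          (fun b : Fin (r + 1) =>
            if h : b.val < (r + 1) - 1 ∧ b.val < m then ⟨b.val, h.2⟩ else j)) := rfl
      rw [hrepr]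
      exact det_submatrix_eq_zero_of_rank_lt B (by rw [hrank]; omega) _ _
    have hfin := key r le_rfl
    rw [hvan, zero_div, sub_zero] at hfin
    show φ (A i j) = _
    rw [← hfin, ← Fin.sum_univ_eq_sum_range, Matrix.mul_assoc, Matrix.mul_apply]
    refine Finset.sum_congr rfl fun l _ => ?_
    beta_reduce
    rw [Matrix.diagonal_mul]
    simp only [Matrix.of_apply]
    rw [dif_pos (show l.val < m by omega), dif_pos (show l.val < n by omega)]
    ring
  · -- L is lower triangular
    intro a b hab
    show φ (mnr A (b.val + 1) a ⟨b.val, by omega⟩) = 0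
    have hz : mnr A (b.val + 1) a ⟨b.val, by omega⟩ = 0 := by
      apply Matrix.det_zero_of_row_eq
        (i := (⟨a.val, by omega⟩ : Fin (b.val + 1))) (j := ⟨b.val, by omega⟩)
      · intro h
        have := congrArg Fin.val h
        simp at this
        omega
      · funext c
        simp only [Matrix.of_apply]
        split_ifs <;> first | rfl | (exfalso; omega)
    rw [hz, map_zero]
  · -- diagonal of L
    intro a
    show φ (mnr A (a.val + 1) ⟨a.val, by omega⟩ ⟨a.val, by omega⟩) = φ (lead A (a.val + 1))
    rw [show lead A (a.val + 1) =
      mnr A (a.val + 1) ⟨(a.val + 1) - 1, by omega⟩ ⟨(a.val + 1) - 1, by omega⟩ from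
      dif_pos ⟨by omega, by omega, by omega⟩]
    rfl
  · -- U is upper triangular
    intro a b hba
    show φ (mnr A (a.val + 1) ⟨a.val, by omega⟩ b) = 0
    have hz : mnr A (a.val + 1) ⟨a.val, by omega⟩ b = 0 := by
      apply Matrix.det_zero_of_column_eq
        (i := (⟨b.val, by omega⟩ : Fin (a.val + 1))) (j := ⟨a.val, by omega⟩)
      · intro h
        have := congrArg Fin.val h
        simp at this
        omega
      intro c
      simp only [Matrix.of_apply]
      split_ifs <;> first | rfl | (exfalso; omega)
    rw [hz, map_zero]
  · -- diagonal of U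
    intro a
    show φ (mnr A (a.val + 1) ⟨a.val, by omega⟩ ⟨a.val, by omega⟩) = φ (lead A (a.val + 1))
    rw [show lead A (a.val + 1) =
      mnr A (a.val + 1) ⟨(a.val + 1) - 1, by omega⟩ ⟨(a.val + 1) - 1, by omega⟩ from
      dif_pos ⟨by omega, by omega, by omega⟩]
    rfl
  · exact fun a b => ⟨_, rfl⟩
  · exact fun a b => ⟨_, rfl⟩
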